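/- Let k ∈ ℕ. If an algorithm A solves a time-free problem P using the failure detector 𝒫_k, then the algorithm Ã = 𝔉_DaS(A) obtained by the Delay-a-Step transformation solves P using the failure detector 𝒫_{k+1}. -/

import Mathlib

namespace FDT

open Classical

/-- A failure pattern: a monotone assignment of crashed sets to times. -/
structure FailurePattern (Proc : Type) where
  F : ℕ → Set Proc
  mono : ∀ t, F t ⊆ F (t + 1)

variable {Proc State Msg PState : Type}

/-- The set of processes live at time `t`. -/
def live (F : FailurePattern Proc) (t : ℕ) : Set Proc := (F.F t)ᶜ

/-- The set of correct processes: those that are always live. -/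
def correctS (F : FailurePattern Proc) : Set Proc := {p | ∀ t, p ∉ F.F t}

/-- The set of faulty processes. -/
def faultyS (F : FailurePattern Proc) : Set Proc := (correctS F)ᶜ

/-- Marabout failure detector: every live process always sees exactly the faulty set. -/
def Marabout (F : FailurePattern Proc) : Set (Proc → ℕ → Set Proc) :=
  {H | ∀ t : ℕ, ∀ p ∉ F.F t, H p t = faultyS F}

/-- The perfect failure detector: strong completeness and strong accuracy. -/
def Perfect (F : FailurePattern Proc) : Set (Proc → ℕ → Set Proc) :=
  {H | (∀ q ∈ faultyS F, ∀ p ∈ correctS F, ∃ t', ∀ t > t', q ∈ H p t) ∧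
       (∀ t : ℕ, ∀ p ∉ F.F t, ∀ q, q ∉ F.F t → q ∉ H p t)}

/-- The failure detector `𝒫_k`: k-completeness and k-accuracy. -/
def Pk (k : ℕ) (F : FailurePattern Proc) : Set (Proc → ℕ → Set Proc) :=
  {H | (∀ p q : Proc, q ∉ F.F k → q ∈ faultyS F → p ∈ correctS F →
          ∃ t', ∀ t > t', q ∈ H p t) ∧
       (∀ (p q : Proc) (t : ℕ), q ∉ F.F k → q ∉ F.F t → q ∉ H p t)}

/-- `F` is an initial crash scenario: all faulty processes crash at time 0. -/
def IsInitialCrashScenario (F : FailurePattern Proc) : Prop :=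
  ∀ t, F.F t = faultyS F

/-- The initial crash scenario `F⁰` associated with `F`. -/
def initialScenario (F : FailurePattern Proc) : FailurePattern Proc :=
  ⟨fun _ => faultyS F, fun _ => subset_rfl⟩

/-- The shifted failure pattern `t ↦ F(t+1)`. -/
def shiftPattern (F : FailurePattern Proc) : FailurePattern Proc :=
  ⟨fun t => F.F (t + 1), fun t => F.mono (t + 1)⟩

/-- A step `(p, s, m, d, s', m')` of process `p`. -/
structure Step (Proc State Msg : Type) where
  proc : Proc
  st : State
  recv : Option (Proc × Msg)
  fd : Set Proc
  st' : State
  send : Option (Proc × Msg)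

/-- An algorithm: state sets, nonempty initial state sets, and a deterministic
transition relation given as the set of allowed steps. -/
structure Algorithm (Proc State Msg : Type) where
  Q : Proc → Set State
  init : Proc → Set State
  init_sub : ∀ p, init p ⊆ Q p
  init_nonempty : ∀ p, (init p).Nonempty
  allowed : Set (Step Proc State Msg)
  allowed_st : ∀ s ∈ allowed, s.st ∈ Q s.proc ∧ s.st' ∈ Q s.proc
  det : ∀ s ∈ allowed, ∀ s' ∈ allowed,
    s.proc = s'.proc → s.st = s'.st → s.recv = s'.recv → s.fd = s'.fd →
    s.st' = s'.st' ∧ s.send = s'.send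

/-- `R = ⟨F, H, I, Φ, T⟩` is a valid run of algorithm `A` using failure detector `D`. -/
def ValidRun (A : Algorithm Proc State Msg)
    (D : FailurePattern Proc → Set (Proc → ℕ → Set Proc))
    (F : FailurePattern Proc) (H : Proc → ℕ → Set Proc) (I : Proc → State)
    (Φ : ℕ → Step Proc State Msg) (T : ℕ → ℕ) : Prop :=
  -- the time sequence is strictly increasing
  StrictMono T ∧
  -- the history belongs to the detector
  H ∈ D F ∧
  -- the initial configuration is made of initial states
  (∀ p, I p ∈ A.init p) ∧
  -- correct processes take infinitely many steps
  (∀ p ∈ correctS F, ∀ n : ℕ, ∃ ℓ ≥ n, (Φ ℓ).proc = p) ∧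
  -- all steps are allowed by the algorithm
  (∀ ℓ, Φ ℓ ∈ A.allowed) ∧
  -- a process taking a step is live at that time
  (∀ ℓ, (Φ ℓ).proc ∉ F.F (T ℓ)) ∧
  -- the failure detector output is the history value at that time
  (∀ ℓ, (Φ ℓ).fd = H (Φ ℓ).proc (T ℓ)) ∧
  -- no spurious messages
  (∀ ℓ q m, (Φ ℓ).recv = some (q, m) →
     ∃ k < ℓ, (Φ k).proc = q ∧ (Φ k).send = some ((Φ ℓ).proc, m)) ∧
  -- reliable links: each sent message received at most once; exactly once at correct processes
  (∀ ℓ q m, (Φ ℓ).send = some (q, m) →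
     (∀ k k', ℓ < k → ℓ < k' → (Φ k).proc = q → (Φ k).recv = some ((Φ ℓ).proc, m) →
        (Φ k').proc = q → (Φ k').recv = some ((Φ ℓ).proc, m) → k = k') ∧
     (q ∈ correctS F → ∃ k > ℓ, (Φ k).proc = q ∧ (Φ k).recv = some ((Φ ℓ).proc, m))) ∧
  -- the first step of a process starts in its initial state
  (∀ ℓ, (∀ k < ℓ, (Φ k).proc ≠ (Φ ℓ).proc) → (Φ ℓ).st = I (Φ ℓ).proc) ∧
  -- the state does not change between consecutive steps of a process
  (∀ ℓ k, ℓ < k → (Φ k).proc = (Φ ℓ).proc →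
     (∀ j, ℓ < j → j < k → (Φ j).proc ≠ (Φ ℓ).proc) → (Φ k).st = (Φ ℓ).st')

/-- `γ(I,Φ,ℓ)`: the configuration (process states) after the first `ℓ` steps of `Φ`. -/
noncomputable def configAt (I : Proc → State) (Φ : ℕ → Step Proc State Msg) :
    ℕ → Proc → State
  | 0 => I
  | (ℓ + 1) => fun p =>
      if (Φ ℓ).proc = p then (Φ ℓ).st' else configAt I Φ ℓ p

/-- `γ_i(I,Φ,ℓ)`: the state of process `p` after its first `ℓ` own steps in `Φ`
(constant once `p` takes no more steps). -/
noncomputable def procStateAfter (I : Proc → State) (Φ : ℕ → Step Proc State Msg)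
    (p : Proc) : ℕ → State
  | 0 => I p
  | (ℓ + 1) =>
      if h : ∃ k, (Φ k).proc = p ∧ {j | j < k ∧ (Φ j).proc = p}.ncard = ℓ
      then (Φ h.choose).st'
      else procStateAfter I Φ p ℓ

/-- `Φ, T` are obtained from `Φt, Tt` by deleting exactly the entries whose
process lies in `bad`. -/
def IsDeletion (bad : Set Proc) (Φt : ℕ → Step Proc State Msg) (Tt : ℕ → ℕ)
    (Φ : ℕ → Step Proc State Msg) (T : ℕ → ℕ) : Prop :=
  ∃ e : ℕ → ℕ, StrictMono e ∧
    (∀ ℓ, (Φt (e ℓ)).proc ∉ bad) ∧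
    (∀ n, (Φt n).proc ∉ bad → ∃ ℓ, e ℓ = n) ∧
    (∀ ℓ, Φ ℓ = Φt (e ℓ)) ∧ (∀ ℓ, T ℓ = Tt (e ℓ))

/-- Index `n` is the first step of its process in schedule `Φ`. -/
def IsFirstStep (Φ : ℕ → Step Proc State Msg) (n : ℕ) : Prop :=
  ∀ j < n, (Φ j).proc ≠ (Φ n).proc

/-- `Φ, T` are obtained from `Φt, Tt` by deleting, for each process, the entry of its
first step. -/
def IsFirstStepDeletion (Φt : ℕ → Step Proc State Msg) (Tt : ℕ → ℕ)
    (Φ : ℕ → Step Proc State Msg) (T : ℕ → ℕ) : Prop :=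
  ∃ e : ℕ → ℕ, StrictMono e ∧
    (∀ ℓ, ¬ IsFirstStep Φt (e ℓ)) ∧
    (∀ n, ¬ IsFirstStep Φt n → ∃ ℓ, e ℓ = n) ∧
    (∀ ℓ, Φ ℓ = Φt (e ℓ)) ∧ (∀ ℓ, T ℓ = Tt (e ℓ))

/-- Data for the Stall-on-Suspect transformation of `A`: the fresh stall states
`S†_i` (disjoint from `Q_i`) together with the bijections `stall_i : Q̂_i → S†_i`. -/
structure SoSData (A : Algorithm Proc State Msg) where
  Sd : Proc → Set State
  disj : ∀ p, Disjoint (Sd p) (A.Q p)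
  stall : Proc → State → State
  stall_maps : ∀ p, ∀ q ∈ A.init p, stall p q ∈ Sd p
  stall_inj : ∀ p, Set.InjOn (stall p) (A.init p)
  stall_surj : ∀ p, Sd p ⊆ stall p '' (A.init p)

/-- The Stall-on-Suspect transformation `Ã = 𝔉_SoS(A)`. -/
def SoSAlg (A : Algorithm Proc State Msg) (D : SoSData A) :
    Algorithm Proc State Msg where
  Q p := A.Q p ∪ D.Sd p
  init := A.init
  init_sub p := (A.init_sub p).trans Set.subset_union_left
  init_nonempty := A.init_nonempty
  allowed := {s | (s ∈ A.allowed ∧ ¬(s.st ∈ A.init s.proc ∧ s.proc ∈ s.fd)) ∨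
      (s.st ∈ A.init s.proc ∧ s.proc ∈ s.fd ∧ s.st' = D.stall s.proc s.st ∧
        s.recv = none ∧ s.send = none) ∨
      (s.st ∈ D.Sd s.proc ∧ s.st' = s.st ∧ s.recv = none ∧ s.send = none)}
  allowed_st := by
    rintro s (⟨hA, -⟩ | ⟨h1, h2, h3, -⟩ | ⟨h1, h2, -⟩)
    · exact ⟨Set.mem_union_left _ (A.allowed_st s hA).1,
        Set.mem_union_left _ (A.allowed_st s hA).2⟩
    · exact ⟨Set.mem_union_left _ (A.init_sub _ h1),
        Set.mem_union_right _ (h3 ▸ D.stall_maps _ _ h1)⟩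
    · exact ⟨Set.mem_union_right _ h1, Set.mem_union_right _ (h2 ▸ h1)⟩
  det := by
    rintro s hs s' hs' hproc hst hrecv hfd
    rcases hs with ⟨hA, hn⟩ | ⟨h1, h2, h3, h4, h5⟩ | ⟨h1, h2, h3, h4⟩ <;>
      rcases hs' with ⟨hA', hn'⟩ | ⟨h1', h2', h3', h4', h5'⟩ | ⟨h1', h2', h3', h4'⟩
    · exact A.det s hA s' hA' hproc hst hrecv hfd
    · exact absurd ⟨by rw [hproc, hst]; exact h1', by rw [hproc, hfd]; exact h2'⟩ hn
    · exact absurd ((A.allowed_st s hA).1)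
        (Set.disjoint_left.mp (D.disj s.proc) (by rw [hproc, hst]; exact h1'))
    · exact absurd ⟨by rw [← hproc, ← hst]; exact h1, by rw [← hproc, ← hfd]; exact h2⟩ hn'
    · refine ⟨?_, by rw [h5, h5']⟩
      rw [h3, h3', hproc, hst]
    · exact absurd (A.init_sub _ h1)
        (Set.disjoint_left.mp (D.disj s.proc) (by rw [hproc, hst]; exact h1'))
    · exact absurd ((A.allowed_st s' hA').1)
        (Set.disjoint_left.mp (D.disj s'.proc) (by rw [← hproc, ← hst]; exact h1))
    · exact absurd (A.init_sub _ h1')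
        (Set.disjoint_left.mp (D.disj s'.proc) (by rw [← hproc, ← hst]; exact h1))
    · exact ⟨by rw [h2, h2', hst], by rw [h4, h4']⟩

/-- Data for the Delay-a-Step transformation of `A`: fresh initial states `S⋆_i`
(disjoint from `Q_i`) together with the bijections `delay_i : S⋆_i → Q̂_i`. -/
structure DaSData (A : Algorithm Proc State Msg) where
  Ss : Proc → Set State
  disj : ∀ p, Disjoint (Ss p) (A.Q p)
  delay : Proc → State → State
  delay_maps : ∀ p, ∀ s ∈ Ss p, delay p s ∈ A.init p
  delay_inj : ∀ p, Set.InjOn (delay p) (Ss p)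
  delay_surj : ∀ p, A.init p ⊆ delay p '' (Ss p)

/-- The Delay-a-Step transformation `Ã = 𝔉_DaS(A)`. -/
def DaSAlg (A : Algorithm Proc State Msg) (D : DaSData A) :
    Algorithm Proc State Msg where
  Q p := A.Q p ∪ D.Ss p
  init p := D.Ss p
  init_sub p := Set.subset_union_right
  init_nonempty p := by
    obtain ⟨q, hq⟩ := A.init_nonempty p
    obtain ⟨s, hs, -⟩ := D.delay_surj p hq
    exact ⟨s, hs⟩
  allowed := {s | s ∈ A.allowed ∨
      (s.st ∈ D.Ss s.proc ∧ s.st' = D.delay s.proc s.st ∧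
        s.recv = none ∧ s.send = none)}
  allowed_st := by
    rintro s (hA | ⟨h1, h2, -⟩)
    · exact ⟨Set.mem_union_left _ (A.allowed_st s hA).1,
        Set.mem_union_left _ (A.allowed_st s hA).2⟩
    · exact ⟨Set.mem_union_right _ h1,
        Set.mem_union_left _ (A.init_sub _ (h2 ▸ D.delay_maps _ _ h1))⟩
  det := by
    rintro s hs s' hs' hproc hst hrecv hfd
    rcases hs with hA | ⟨h1, h2, h3, h4⟩ <;> rcases hs' with hA' | ⟨h1', h2', h3', h4'⟩
    · exact A.det s hA s' hA' hproc hst hrecv hfd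
    · exact absurd ((A.allowed_st s hA).1)
        (Set.disjoint_left.mp (D.disj s.proc) (by rw [hproc, hst]; exact h1'))
    · exact absurd ((A.allowed_st s' hA').1)
        (Set.disjoint_left.mp (D.disj s'.proc) (by rw [← hproc, ← hst]; exact h1))
    · exact ⟨by rw [h2, h2', hproc, hst], by rw [h4, h4']⟩

/-- One stuttering insertion: `w'` is obtained from `w` by inserting between the
`n`-th and `(n+1)`-st configurations a configuration agreeing componentwise with
one of the two. -/
def Stutter1 (w w' : ℕ → Proc → PState) : Prop :=
  ∃ n : ℕ, (∀ k ≤ n, w' k = w k) ∧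
    (∀ p, w' (n + 1) p = w n p ∨ w' (n + 1) p = w (n + 1) p) ∧
    (∀ k, n < k → w' (k + 1) = w k)

/-- `w ⊑ w'`: `w'` is obtained from `w` by finitely many stuttering insertions. -/
def Stutter (w w' : ℕ → Proc → PState) : Prop :=
  Relation.ReflTransGen Stutter1 w w'

/-- A time-free problem: a predicate on problem-configuration sequences and
failure patterns, satisfying crash time independence and finite stuttering. -/
structure TimeFreeProblem (Proc PState : Type) (initP : Set PState) where
  pred : (ℕ → Proc → PState) → FailurePattern Proc → Prop
  crashIndep : ∀ (w : ℕ → Proc → PState) (F F' : FailurePattern Proc),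
    (∀ p, w 0 p ∈ initP) → correctS F = correctS F' → (pred w F ↔ pred w F')
  stutterInv : ∀ (w w' : ℕ → Proc → PState) (F : FailurePattern Proc),
    (∀ p, w 0 p ∈ initP) → Stutter w w' → (pred w F ↔ pred w' F)

/-- `V` is an interpretation of the states of `A`: each `V_i` maps `Q_i` onto the
problem states, and `Q̂_i` onto the initial problem states `initP`. -/
def IsInterp (A : Algorithm Proc State Msg) (initP : Set PState)
    (V : Proc → State → PState) : Prop :=
  (∀ p, V p '' A.Q p = Set.univ) ∧ (∀ p, V p '' A.init p = initP)

/-- The interpreted run of a run with initial configuration `I` and schedule `Φ`. -/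
noncomputable def interpRun (V : Proc → State → PState) (I : Proc → State)
    (Φ : ℕ → Step Proc State Msg) : ℕ → Proc → PState :=
  fun ℓ p => V p (configAt I Φ ℓ p)

/-- Algorithm `A` solves problem `P` using failure detector `D`. -/
noncomputable def Solves (A : Algorithm Proc State Msg)
    (D : FailurePattern Proc → Set (Proc → ℕ → Set Proc))
    (P : (ℕ → Proc → PState) → FailurePattern Proc → Prop)
    (initP : Set PState) : Prop :=
  ∃ V : Proc → State → PState, IsInterp A initP V ∧
    ∀ (F : FailurePattern Proc) (H : Proc → ℕ → Set Proc) (I : Proc → State)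
      (Φ : ℕ → Step Proc State Msg) (T : ℕ → ℕ),
      ValidRun A D F H I Φ T → P (interpRun V I Φ) F

/-- Problem `P` is solvable using failure detector `D`. -/
noncomputable def SolvableWith (Proc : Type) {PState : Type}
    (D : FailurePattern Proc → Set (Proc → ℕ → Set Proc))
    (P : (ℕ → Proc → PState) → FailurePattern Proc → Prop)
    (initP : Set PState) : Prop :=
  ∃ (State Msg : Type) (A : Algorithm Proc State Msg), Solves A D P initP

/-- Problem states of strong consensus: an input value in `{0,1}` and a decision
in `{⊥,0,1}`. -/
abbrev SCState : Type := Bool × Option Bool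

/-- Initial problem states of strong consensus: no decision yet. -/
def SCinit : Set SCState := {s | s.2 = none}

/-- The strong-consensus predicate: inputs never change, decisions change at most
once and only from `⊥`, and all correct processes eventually forever decide the
input value of a single correct process (when a correct process exists). -/
def SCpred (w : ℕ → Proc → SCState) (F : FailurePattern Proc) : Prop :=
  (∀ (p : Proc) (ℓ : ℕ), (w ℓ p).1 = (w 0 p).1) ∧
  (∀ (p : Proc) (ℓ : ℕ), (w ℓ p).2 ≠ none → (w (ℓ + 1) p).2 = (w ℓ p).2) ∧
  ((correctS F).Nonempty →
    ∃ j ∈ correctS F, ∀ i ∈ correctS F, ∃ N, ∀ ℓ ≥ N, (w ℓ i).2 = some (w 0 j).1)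


lemma configAt_eq_of_no_step (I : Proc → State) (Φ : ℕ → Step Proc State Msg) (p : Proc) :
    ∀ n, (∀ j < n, (Φ j).proc ≠ p) → configAt I Φ n p = I p := by
  intro n
  induction n with
  | zero => intro _; rfl
  | succ n ih =>
    intro hn
    show (if (Φ n).proc = p then (Φ n).st' else configAt I Φ n p) = I p
    rw [if_neg (hn n (Nat.lt_succ_self n)), ih (fun j hj => hn j (hj.trans (Nat.lt_succ_self n)))]

lemma stutter_of_count (w : ℕ → Proc → PState) :
    ∀ (N : ℕ) (c : ℕ → ℕ), c 0 = 0 →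
      (∀ m, c (m + 1) = c m ∨ c (m + 1) = c m + 1) →
      {m | c (m + 1) = c m}.Finite →
      {m | c (m + 1) = c m}.ncard ≤ N →
      Stutter w (fun m => w (c m)) := by
  intro N
  induction N with
  | zero =>
    intro c h0 hstep hfin hcard
    have hempty : {m | c (m + 1) = c m} = ∅ :=
      (Set.ncard_eq_zero hfin).mp (Nat.le_zero.mp hcard)
    have hne : ∀ x, c (x + 1) ≠ c x := by
      intro x hx
      rw [Set.eq_empty_iff_forall_notMem] at hempty
      exact hempty x hx
    have hid : ∀ m, c m = m := by
      intro m
      induction m with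
      | zero => exact h0
      | succ m ih =>
        rcases hstep m with hm | hm
        · exact absurd hm (hne m)
        · rw [hm, ih]
    have heq : (fun m => w (c m)) = w := funext fun m => by rw [hid]
    rw [heq]
    exact Relation.ReflTransGen.refl
  | succ N ih =>
    intro c h0 hstep hfin hcard
    by_cases hne : ∃ m, c (m + 1) = c m
    · have hm0 : c (Nat.find hne + 1) = c (Nat.find hne) := Nat.find_spec hne
      set m0 := Nat.find hne with hm0def
      have hmin : ∀ j < m0, c (j + 1) ≠ c j := fun j hj => Nat.find_min hne hj
      set c' : ℕ → ℕ := fun m => if m ≤ m0 then c m else c (m + 1) with hc'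
      have hc'le : ∀ m, m ≤ m0 → c' m = c m := by
        intro m hm; rw [hc']; simp only [if_pos hm]
      have hc'gt : ∀ m, m0 < m → c' m = c (m + 1) := by
        intro m hm; rw [hc']; simp only [if_neg (not_le.mpr hm)]
      have h0' : c' 0 = 0 := by rw [hc'le 0 (Nat.zero_le m0), h0]
      have hstep' : ∀ m, c' (m + 1) = c' m ∨ c' (m + 1) = c' m + 1 := by
        intro m
        rcases lt_trichotomy m m0 with hc1 | hc1 | hc1
        · rw [hc'le (m + 1) hc1, hc'le m hc1.le]; exact hstep m
        · rw [hc1, hc'gt (m0 + 1) (Nat.lt_succ_self m0), hc'le m0 le_rfl, ← hm0]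
          exact hstep (m0 + 1)
        · rw [hc'gt (m + 1) (hc1.trans (Nat.lt_succ_self m)), hc'gt m hc1]
          exact hstep (m + 1)
      have hsub : (fun m => m + 1) '' {m | c' (m + 1) = c' m}
          ⊆ {m | c (m + 1) = c m} \ {m0} := by
        rintro _ ⟨m, hm, rfl⟩
        simp only [Set.mem_setOf_eq] at hm
        rcases lt_trichotomy m m0 with hc1 | hc1 | hc1
        · rw [hc'le (m + 1) hc1, hc'le m hc1.le] at hm
          exact absurd hm (hmin m hc1)
        · rw [hc1] at hm ⊢
          rw [hc'gt (m0 + 1) (Nat.lt_succ_self m0), hc'le m0 le_rfl, ← hm0] at hm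
          exact ⟨hm, fun hmem => by simp at hmem⟩
        · rw [hc'gt (m + 1) (hc1.trans (Nat.lt_succ_self m)), hc'gt m hc1] at hm
          exact ⟨hm, fun hmem => by simp at hmem; omega⟩
      have hinj : Function.Injective (fun m : ℕ => m + 1) := fun a b hab => by simpa using hab
      have hfin' : {m | c' (m + 1) = c' m}.Finite :=
        Set.Finite.of_finite_image (((hfin.diff).subset hsub)) hinj.injOn
      have hm0mem : m0 ∈ {m | c (m + 1) = c m} := hm0
      have hcard' : {m | c' (m + 1) = c' m}.ncard ≤ N := by
        have h1 : {m | c' (m + 1) = c' m}.ncard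
            = ((fun m : ℕ => m + 1) '' {m | c' (m + 1) = c' m}).ncard :=
          (Set.ncard_image_of_injective _ hinj).symm
        have h2 : ((fun m : ℕ => m + 1) '' {m | c' (m + 1) = c' m}).ncard
            ≤ ({m | c (m + 1) = c m} \ {m0}).ncard :=
          Set.ncard_le_ncard hsub hfin.diff
        have h3 : ({m | c (m + 1) = c m} \ {m0}).ncard
            = {m | c (m + 1) = c m}.ncard - 1 :=
          Set.ncard_diff_singleton_of_mem hm0mem
        omega
      have hS : Stutter w (fun m => w (c' m)) := ih c' h0' hstep' hfin' hcard'
      refine Relation.ReflTransGen.tail hS ?_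
      refine ⟨m0, ?_, ?_, ?_⟩
      · intro j hj
        show w (c j) = w (c' j)
        rw [hc'le j hj]
      · intro p
        left
        show w (c (m0 + 1)) p = w (c' m0) p
        rw [hm0, hc'le m0 le_rfl]
      · intro j hj
        show w (c (j + 1)) = w (c' j)
        rw [hc'gt j hj]
    · push_neg at hne
      have hid : ∀ m, c m = m := by
        intro m
        induction m with
        | zero => exact h0
        | succ m ihm =>
          rcases hstep m with hm | hm
          · exact absurd hm (hne m)
          · rw [hm, ihm]
      have heq : (fun m => w (c m)) = w := funext fun m => by rw [hid]
      rw [heq]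
      exact Relation.ReflTransGen.refl

/-- If `A` solves a time-free problem `P` using `𝒫_k`, then
`Ã = 𝔉_DaS(A)` solves `P` using `𝒫_{k+1}`. -/
theorem das_solves {Proc State Msg PState : Type} [Fintype Proc] [Nonempty Proc] (k : ℕ)
    (A : Algorithm Proc State Msg) (D : DaSData A)
    (initP : Set PState) (P : TimeFreeProblem Proc PState initP)
    (h : Solves A (Pk k) P.pred initP) :
    Solves (DaSAlg A D) (Pk (k + 1)) P.pred initP := by
  classical
  obtain ⟨V, ⟨hVQ, hVinit⟩, hsol⟩ := h
  refine ⟨fun p s => if s ∈ D.Ss p then V p (D.delay p s) else V p s, ⟨?_, ?_⟩, ?_⟩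
  · intro p
    apply Set.eq_univ_of_forall
    intro x
    have hx : x ∈ V p '' A.Q p := by rw [hVQ p]; trivial
    obtain ⟨s, hs, rfl⟩ := hx
    refine ⟨s, Or.inl hs, ?_⟩
    show (if s ∈ D.Ss p then V p (D.delay p s) else V p s) = V p s
    rw [if_neg (fun hmem => Set.disjoint_left.mp (D.disj p) hmem hs)]
  · intro p
    apply Set.Subset.antisymm
    · rintro _ ⟨s, hs, rfl⟩
      have hs2 : s ∈ D.Ss p := hs
      show (if s ∈ D.Ss p then V p (D.delay p s) else V p s) ∈ initP
      rw [if_pos hs2, ← hVinit p]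
      exact ⟨D.delay p s, D.delay_maps p s hs2, rfl⟩
    · intro x hx
      rw [← hVinit p] at hx
      obtain ⟨q, hq, rfl⟩ := hx
      obtain ⟨s, hs, hds⟩ := D.delay_surj p hq
      refine ⟨s, hs, ?_⟩
      show (if s ∈ D.Ss p then V p (D.delay p s) else V p s) = V p q
      rw [if_pos hs, hds]
  · intro F H I' Φt Tt hR
    obtain ⟨hTmono, hH, hinit, hinf, hallowed, hlive, hfd, hnospur, hrel, hfirst, hchain⟩ := hR
    have hallowed' : ∀ n, Φt n ∈ A.allowed ∨
        ((Φt n).st ∈ D.Ss (Φt n).proc ∧ (Φt n).st' = D.delay (Φt n).proc (Φt n).st ∧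
          (Φt n).recv = none ∧ (Φt n).send = none) := fun n => hallowed n
    have hinitSs : ∀ p, I' p ∈ D.Ss p := fun p => hinit p
    have hst' : ∀ n, (Φt n).st' ∈ A.Q (Φt n).proc := by
      intro n
      rcases hallowed' n with hA | ⟨h1, h2, -, -⟩
      · exact (A.allowed_st _ hA).2
      · rw [h2]; exact A.init_sub _ (D.delay_maps _ _ h1)
    have hfirststep : ∀ n, IsFirstStep Φt n →
        (Φt n).st = I' (Φt n).proc ∧
        (Φt n).st' = D.delay (Φt n).proc (I' (Φt n).proc) ∧
        (Φt n).recv = none ∧ (Φt n).send = none := by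
      intro n hn
      have hstI : (Φt n).st = I' (Φt n).proc := hfirst n hn
      have hSs : (Φt n).st ∈ D.Ss (Φt n).proc := by rw [hstI]; exact hinitSs _
      rcases hallowed' n with hA | ⟨-, h2, h3, h4⟩
      · exact absurd (A.allowed_st _ hA).1 (Set.disjoint_left.mp (D.disj _) hSs)
      · exact ⟨hstI, by rw [h2, hstI], h3, h4⟩
    have hprev : ∀ n, ¬ IsFirstStep Φt n →
        ∃ j0, j0 < n ∧ (Φt j0).proc = (Φt n).proc ∧ (Φt n).st = (Φt j0).st' := by
      intro n hn
      have hne : ∃ j, j < n ∧ (Φt j).proc = (Φt n).proc := by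
        by_contra hc
        push_neg at hc
        exact hn (fun j hj => hc j hj)
      obtain ⟨j, hjn, hjp⟩ := hne
      set s : Finset ℕ := (Finset.range n).filter (fun j => (Φt j).proc = (Φt n).proc) with hs
      have hsne : s.Nonempty :=
        ⟨j, Finset.mem_filter.mpr ⟨Finset.mem_range.mpr hjn, hjp⟩⟩
      have hmem : s.max' hsne ∈ Finset.filter
          (fun j => (Φt j).proc = (Φt n).proc) (Finset.range n) := s.max'_mem hsne
      have h1 := Finset.mem_range.mp (Finset.mem_filter.mp hmem).1
      have h2 := (Finset.mem_filter.mp hmem).2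
      refine ⟨s.max' hsne, h1, h2, ?_⟩
      apply hchain _ _ h1 h2.symm
      intro i hi1 hi2 hip
      have hmemi : i ∈ s :=
        Finset.mem_filter.mpr ⟨Finset.mem_range.mpr hi2, hip.trans h2⟩
      exact absurd (s.le_max' i hmemi) (not_le.mpr hi1)
    have hnonfirst : ∀ n, ¬ IsFirstStep Φt n →
        (Φt n).st ∈ A.Q (Φt n).proc ∧ Φt n ∈ A.allowed := by
      intro n hn
      obtain ⟨j0, hj0lt, hj0p, hstn⟩ := hprev n hn
      have hQ : (Φt n).st ∈ A.Q (Φt n).proc := by rw [hstn, ← hj0p]; exact hst' j0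
      refine ⟨hQ, ?_⟩
      rcases hallowed' n with hA | ⟨h1, -, -, -⟩
      · exact hA
      · exact absurd hQ (Set.disjoint_left.mp (D.disj _) h1)
    have hFSfin : {n | IsFirstStep Φt n}.Finite := by
      apply Set.Finite.of_finite_image (f := fun n => (Φt n).proc) (Set.toFinite _)
      intro a ha b hb hab
      by_contra hne2
      rcases Nat.lt_or_ge a b with hab2 | hab2
      · exact hb a hab2 hab
      · exact ha b (by omega) hab.symm
    set NF : ℕ → Prop := fun n => ¬ IsFirstStep Φt n with hNF
    have hinfNF : {n | NF n}.Infinite := by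
      have hc : {n | NF n} = {n | IsFirstStep Φt n}ᶜ := by rw [hNF]; rfl
      rw [hc]
      exact hFSfin.infinite_compl
    have he_mono : StrictMono (Nat.nth NF) := Nat.nth_strictMono hinfNF
    have heNF : ∀ ℓ, ¬ IsFirstStep Φt (Nat.nth NF ℓ) := by
      intro ℓ
      have hmem := Nat.nth_mem_of_infinite hinfNF ℓ
      rw [hNF] at hmem
      exact hmem
    have hnc : ∀ n, ¬ IsFirstStep Φt n → Nat.nth NF (Nat.count NF n) = n := by
      intro n hn
      exact Nat.nth_count (by rw [hNF]; exact hn)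
    have hlt_count : ∀ j n, j < Nat.count NF n → Nat.nth NF j < n :=
      fun j n hj => Nat.nth_lt_of_lt_count hj
    have hcsucc_pos : ∀ m, ¬ IsFirstStep Φt m →
        Nat.count NF (m + 1) = Nat.count NF m + 1 := by
      intro m hm
      rw [Nat.count_succ, if_pos (show NF m by rw [hNF]; exact hm)]
    have hcsucc_neg : ∀ m, IsFirstStep Φt m →
        Nat.count NF (m + 1) = Nat.count NF m := by
      intro m hm
      rw [Nat.count_succ, if_neg (show ¬ NF m by rw [hNF]; exact fun hx => hx hm), add_zero]
    have h0first : IsFirstStep Φt 0 := fun j hj => absurd hj (Nat.not_lt_zero j)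
    have he_pos : ∀ ℓ, 1 ≤ Nat.nth NF ℓ := by
      intro ℓ
      rcases Nat.eq_zero_or_pos (Nat.nth NF ℓ) with h0 | h1
      · exact absurd (show IsFirstStep Φt (Nat.nth NF ℓ) by rw [h0]; exact h0first) (heNF ℓ)
      · exact h1
    have hT1 : ∀ ℓ, 1 ≤ Tt (Nat.nth NF ℓ) :=
      fun ℓ => le_trans (he_pos ℓ) hTmono.le_apply
    have hcorr : correctS (shiftPattern F) = correctS F := by
      ext p
      constructor
      · intro hp t
        cases t with
        | zero => exact fun h0 => hp 0 (F.mono 0 h0)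
        | succ t => exact hp t
      · intro hp t
        exact hp (t + 1)
    have hfaulty : faultyS (shiftPattern F) = faultyS F := by
      rw [faultyS, faultyS, hcorr]
    obtain ⟨hHc, hHa⟩ := hH
    have hH' : (fun p t => H p (t + 1)) ∈ Pk k (shiftPattern F) := by
      constructor
      · intro p q hqk hqf hpc
        obtain ⟨t', ht'⟩ := hHc p q hqk (by rwa [hfaulty] at hqf) (by rwa [hcorr] at hpc)
        exact ⟨t', fun t ht => ht' (t + 1) (by omega)⟩
      · intro p q t hqk hqt
        exact hHa p q (t + 1) hqk hqt
    have hvalid : ValidRun A (Pk k) (shiftPattern F) (fun p t => H p (t + 1))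
        (fun p => D.delay p (I' p)) (fun ℓ => Φt (Nat.nth NF ℓ))
        (fun ℓ => Tt (Nat.nth NF ℓ) - 1) := by
      refine ⟨?_, hH', ?_, ?_, ?_, ?_, ?_, ?_, ?_, ?_, ?_⟩
      · intro a b hab
        have h1 := hTmono (he_mono hab)
        have h2 := hT1 a
        show Tt (Nat.nth NF a) - 1 < Tt (Nat.nth NF b) - 1
        omega
      · exact fun p => D.delay_maps p _ (hinitSs p)
      · intro p hp n
        have hp' : p ∈ correctS F := by rwa [hcorr] at hp
        obtain ⟨m, hm, hmp⟩ := hinf p hp' (Nat.nth NF n + 1)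
        obtain ⟨m', hm', hmp'⟩ := hinf p hp' (m + 1)
        have hNFm' : ¬ IsFirstStep Φt m' :=
          fun hfs => hfs m (by omega) (hmp.trans hmp'.symm)
        have hej : Nat.nth NF (Nat.count NF m') = m' := hnc m' hNFm'
        refine ⟨Nat.count NF m', ?_, ?_⟩
        · have hlt : Nat.nth NF n < Nat.nth NF (Nat.count NF m') := by rw [hej]; omega
          exact (he_mono.lt_iff_lt.mp hlt).le
        · show (Φt (Nat.nth NF (Nat.count NF m'))).proc = p
          rw [hej]; exact hmp'
      · exact fun ℓ => (hnonfirst _ (heNF ℓ)).2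
      · intro ℓ
        have h1 := hT1 ℓ
        show (Φt (Nat.nth NF ℓ)).proc ∉ F.F (Tt (Nat.nth NF ℓ) - 1 + 1)
        rw [show Tt (Nat.nth NF ℓ) - 1 + 1 = Tt (Nat.nth NF ℓ) by omega]
        exact hlive (Nat.nth NF ℓ)
      · intro ℓ
        show (Φt (Nat.nth NF ℓ)).fd = H (Φt (Nat.nth NF ℓ)).proc (Tt (Nat.nth NF ℓ) - 1 + 1)
        rw [show Tt (Nat.nth NF ℓ) - 1 + 1 = Tt (Nat.nth NF ℓ) by (have := hT1 ℓ; omega)]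
        exact hfd (Nat.nth NF ℓ)
      · intro ℓ q m hr
        obtain ⟨j, hj, hjp, hjs⟩ := hnospur (Nat.nth NF ℓ) q m hr
        have hNFj : ¬ IsFirstStep Φt j := by
          intro hfs
          rw [(hfirststep j hfs).2.2.2] at hjs
          exact Option.some_ne_none _ hjs.symm
        have hej : Nat.nth NF (Nat.count NF j) = j := hnc j hNFj
        refine ⟨Nat.count NF j, ?_, ?_, ?_⟩
        · exact he_mono.lt_iff_lt.mp (by rw [hej]; exact hj)
        · show (Φt (Nat.nth NF (Nat.count NF j))).proc = q
          rw [hej]; exact hjp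
        · show (Φt (Nat.nth NF (Nat.count NF j))).send = _
          rw [hej]; exact hjs
      · intro ℓ q m hsend
        constructor
        · intro a b ha hb hap har hbp hbr
          exact he_mono.injective
            ((hrel (Nat.nth NF ℓ) q m hsend).1 (Nat.nth NF a) (Nat.nth NF b)
              (he_mono ha) (he_mono hb) hap har hbp hbr)
        · intro hq
          obtain ⟨j, hj, hjp, hjr⟩ := (hrel (Nat.nth NF ℓ) q m hsend).2 (by rwa [hcorr] at hq)
          have hNFj : ¬ IsFirstStep Φt j := by
            intro hfs
            rw [(hfirststep j hfs).2.2.1] at hjr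
            exact Option.some_ne_none _ hjr.symm
          have hej : Nat.nth NF (Nat.count NF j) = j := hnc j hNFj
          refine ⟨Nat.count NF j, ?_, ?_, ?_⟩
          · exact he_mono.lt_iff_lt.mp (by rw [hej]; exact hj)
          · show (Φt (Nat.nth NF (Nat.count NF j))).proc = q
            rw [hej]; exact hjp
          · show (Φt (Nat.nth NF (Nat.count NF j))).recv = _
            rw [hej]; exact hjr
      · intro ℓ hℓ
        have hall : ∀ j, j < Nat.nth NF ℓ → (Φt j).proc = (Φt (Nat.nth NF ℓ)).proc →
            IsFirstStep Φt j := by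
          intro j hj hjp
          by_contra hnfj
          have hej : Nat.nth NF (Nat.count NF j) = j := hnc j hnfj
          have hcj : Nat.count NF j < ℓ := he_mono.lt_iff_lt.mp (by rw [hej]; exact hj)
          exact hℓ (Nat.count NF j) hcj
            (by show (Φt (Nat.nth NF (Nat.count NF j))).proc = _; rw [hej]; exact hjp)
        obtain ⟨j0, hj0lt, hj0p, hstn⟩ := hprev (Nat.nth NF ℓ) (heNF ℓ)
        have hfs := hall j0 hj0lt hj0p
        have h2 := (hfirststep j0 hfs).2.1
        show (Φt (Nat.nth NF ℓ)).st
          = D.delay (Φt (Nat.nth NF ℓ)).proc (I' (Φt (Nat.nth NF ℓ)).proc)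
        rw [hstn, h2, hj0p]
      · intro ℓ m hlm hpm hmid
        apply hchain (Nat.nth NF ℓ) (Nat.nth NF m) (he_mono hlm) hpm
        intro j hj1 hj2 hjp
        have hnfj : ¬ IsFirstStep Φt j := fun hfs => (hfs (Nat.nth NF ℓ) hj1) hjp.symm
        have hej : Nat.nth NF (Nat.count NF j) = j := hnc j hnfj
        have h1 : ℓ < Nat.count NF j := he_mono.lt_iff_lt.mp (by rw [hej]; exact hj1)
        have h2 : Nat.count NF j < m := he_mono.lt_iff_lt.mp (by rw [hej]; exact hj2)
        exact hmid (Nat.count NF j) h1 h2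
          (by show (Φt (Nat.nth NF (Nat.count NF j))).proc = _; rw [hej]; exact hjp)
    have hP' := hsol (shiftPattern F) (fun p t => H p (t + 1)) (fun p => D.delay p (I' p))
      (fun ℓ => Φt (Nat.nth NF ℓ)) (fun ℓ => Tt (Nat.nth NF ℓ) - 1) hvalid
    have hinitw : ∀ p,
        interpRun V (fun p => D.delay p (I' p)) (fun ℓ => Φt (Nat.nth NF ℓ)) 0 p ∈ initP := by
      intro p
      show V p (D.delay p (I' p)) ∈ initP
      rw [← hVinit p]
      exact ⟨D.delay p (I' p), D.delay_maps p _ (hinitSs p), rfl⟩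
    have hPF : P.pred (interpRun V (fun p => D.delay p (I' p)) (fun ℓ => Φt (Nat.nth NF ℓ))) F :=
      (P.crashIndep _ (shiftPattern F) F hinitw hcorr).mp hP'
    have hL : ∀ m p,
        (if configAt I' Φt m p ∈ D.Ss p then V p (D.delay p (configAt I' Φt m p))
          else V p (configAt I' Φt m p))
        = V p (configAt (fun p => D.delay p (I' p)) (fun ℓ => Φt (Nat.nth NF ℓ))
            (Nat.count NF m) p) := by
      intro m
      induction m with
      | zero =>
        intro p
        show (if I' p ∈ D.Ss p then V p (D.delay p (I' p)) else V p (I' p)) = _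
        rw [Nat.count_zero, if_pos (hinitSs p)]
        rfl
      | succ m ih =>
        intro p
        have hnotSs : ∀ s, s ∈ A.Q p → s ∉ D.Ss p :=
          fun s hsQ hmem => Set.disjoint_left.mp (D.disj p) hmem hsQ
        by_cases hpm : (Φt m).proc = p
        · by_cases hnf : IsFirstStep Φt m
          · obtain ⟨hstm, hstm', -, -⟩ := hfirststep m hnf
            have hc1 : configAt I' Φt (m + 1) p = D.delay p (I' p) := by
              show (if (Φt m).proc = p then (Φt m).st' else configAt I' Φt m p) = _
              rw [if_pos hpm, hstm', hpm]
            have hnostep : ∀ j, j < Nat.count NF m → (Φt (Nat.nth NF j)).proc ≠ p := by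
              intro j hj hjp
              exact hnf _ (hlt_count j m hj) (hjp.trans hpm.symm)
            have hc2 : configAt (fun p => D.delay p (I' p)) (fun ℓ => Φt (Nat.nth NF ℓ))
                (Nat.count NF m) p = D.delay p (I' p) :=
              configAt_eq_of_no_step _ _ p _ hnostep
            rw [hcsucc_neg m hnf, hc1, hc2,
              if_neg (hnotSs _ (A.init_sub p (D.delay_maps p _ (hinitSs p))))]
          · have hem : Nat.nth NF (Nat.count NF m) = m := hnc m hnf
            have hQ' : (Φt m).st' ∈ A.Q p := by rw [← hpm]; exact hst' m
            have hc1 : configAt I' Φt (m + 1) p = (Φt m).st' := by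
              show (if (Φt m).proc = p then (Φt m).st' else configAt I' Φt m p) = _
              rw [if_pos hpm]
            have hc2 : configAt (fun p => D.delay p (I' p)) (fun ℓ => Φt (Nat.nth NF ℓ))
                (Nat.count NF m + 1) p = (Φt m).st' := by
              show (if (Φt (Nat.nth NF (Nat.count NF m))).proc = p
                then (Φt (Nat.nth NF (Nat.count NF m))).st'
                else configAt (fun p => D.delay p (I' p)) (fun ℓ => Φt (Nat.nth NF ℓ))
                  (Nat.count NF m) p) = _
              rw [hem, if_pos hpm]
            rw [hcsucc_pos m hnf, hc1, hc2, if_neg (hnotSs _ hQ')]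
        · have hc1 : configAt I' Φt (m + 1) p = configAt I' Φt m p := by
            show (if (Φt m).proc = p then (Φt m).st' else configAt I' Φt m p) = _
            rw [if_neg hpm]
          by_cases hnf : IsFirstStep Φt m
          · rw [hcsucc_neg m hnf, hc1]
            exact ih p
          · have hem : Nat.nth NF (Nat.count NF m) = m := hnc m hnf
            have hc2 : configAt (fun p => D.delay p (I' p)) (fun ℓ => Φt (Nat.nth NF ℓ))
                (Nat.count NF m + 1) p
                = configAt (fun p => D.delay p (I' p)) (fun ℓ => Φt (Nat.nth NF ℓ))
                  (Nat.count NF m) p := by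
              show (if (Φt (Nat.nth NF (Nat.count NF m))).proc = p
                then (Φt (Nat.nth NF (Nat.count NF m))).st'
                else configAt (fun p => D.delay p (I' p)) (fun ℓ => Φt (Nat.nth NF ℓ))
                  (Nat.count NF m) p) = _
              rw [hem, if_neg hpm]
            rw [hcsucc_pos m hnf, hc1, hc2]
            exact ih p
    have hstep2 : ∀ m, Nat.count NF (m + 1) = Nat.count NF m ∨
        Nat.count NF (m + 1) = Nat.count NF m + 1 := by
      intro m
      by_cases hnf : IsFirstStep Φt m
      · exact Or.inl (hcsucc_neg m hnf)
      · exact Or.inr (hcsucc_pos m hnf)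
    have hseq : {m | Nat.count NF (m + 1) = Nat.count NF m} = {n | IsFirstStep Φt n} := by
      ext m
      simp only [Set.mem_setOf_eq]
      constructor
      · intro hm
        by_contra hnf
        rw [hcsucc_pos m hnf] at hm
        omega
      · exact hcsucc_neg m
    have hstut : Stutter
        (interpRun V (fun p => D.delay p (I' p)) (fun ℓ => Φt (Nat.nth NF ℓ)))
        (fun m => interpRun V (fun p => D.delay p (I' p)) (fun ℓ => Φt (Nat.nth NF ℓ))
          (Nat.count NF m)) :=
      stutter_of_count _ ({n | IsFirstStep Φt n}.ncard) _ (Nat.count_zero NF) hstep2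
        (hseq ▸ hFSfin) (le_of_eq (congrArg Set.ncard hseq))
    have hw : interpRun (fun p s => if s ∈ D.Ss p then V p (D.delay p s) else V p s) I' Φt
        = fun m => interpRun V (fun p => D.delay p (I' p)) (fun ℓ => Φt (Nat.nth NF ℓ))
            (Nat.count NF m) := by
      funext m p
      exact hL m p
    rw [hw]
    exact (P.stutterInv _ _ F hinitw hstut).mp hPF


end FDT
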